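/- Let G ⊊ ℝⁿ be a domain and let 1 ≤ p < ∞. Then for all x, y ∈ G, δ_G^p(x,y) ≤ 2 · j_G^p(x,y), where in δ_G^p the boundary is taken in ℝ̄ⁿ (so it contains ∞ if G is unbounded). -/

import Mathlib

open OnePoint

noncomputable section

/-- Inverse hyperbolic cosine: arcosh t = log (t + √(t² − 1)). -/
def arcosh (t : ℝ) : ℝ := Real.log (t + Real.sqrt (t ^ 2 - 1))

/-- Euclidean n-space. -/
abbrev En (n : ℕ) : Type := EuclideanSpace ℝ (Fin n)

/-- The chordal (spherical) metric on the one-point compactification ℝ̄ⁿ of ℝⁿ. -/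
def chordal {n : ℕ} : OnePoint (En n) → OnePoint (En n) → ℝ
  | ∞, ∞ => 0
  | ∞, (y : En n) => 1 / Real.sqrt (1 + ‖y‖ ^ 2)
  | (x : En n), ∞ => 1 / Real.sqrt (1 + ‖x‖ ^ 2)
  | (x : En n), (y : En n) => ‖x - y‖ / (Real.sqrt (1 + ‖x‖ ^ 2) * Real.sqrt (1 + ‖y‖ ^ 2))

/-- The cross-ratio |a,b,c,d| = q(a,c)q(b,d)/(q(a,b)q(c,d)) in the chordal metric. -/
def crossRatio {n : ℕ} (a b c d : OnePoint (En n)) : ℝ :=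
  chordal a c * chordal b d / (chordal a b * chordal c d)

/-- The generalized hyperbolic metric ρ_G(x,y) = sup_{a,b ∈ ∂G} arcosh(1 + |a,x,b,y||a,y,b,x|/2). -/
def rho {n : ℕ} (G : Set (OnePoint (En n))) (x y : OnePoint (En n)) : ℝ :=
  sSup {r : ℝ | ∃ a ∈ frontier G, ∃ b ∈ frontier G,
    r = arcosh (1 + crossRatio a x b y * crossRatio a y b x / 2)}

/-- Seittenranta's metric δ_G(x,y) = sup_{a,b ∈ ∂G} log(1 + |a,x,b,y|). -/
def seittenranta {n : ℕ} (G : Set (OnePoint (En n))) (x y : OnePoint (En n)) : ℝ :=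
  sSup {r : ℝ | ∃ a ∈ frontier G, ∃ b ∈ frontier G,
    r = Real.log (1 + crossRatio a x b y)}

/-- The j-metric j_G(x,y) = log(1 + |x−y|/min(d(x,∂G), d(y,∂G))). -/
def jMetric {n : ℕ} (G : Set (En n)) (x y : En n) : ℝ :=
  Real.log (1 + ‖x - y‖ / min (Metric.infDist x (frontier G)) (Metric.infDist y (frontier G)))

/-- The metric δ_G^p(x,y) = sup_{a,b ∈ ∂G} log(1 + (|x,a,y,b|^p + |x,b,y,a|^p)^(1/p)). -/
def deltaP {n : ℕ} (p : ℝ) (G : Set (OnePoint (En n))) (x y : OnePoint (En n)) : ℝ :=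
  sSup {r : ℝ | ∃ a ∈ frontier G, ∃ b ∈ frontier G,
    r = Real.log (1 + (crossRatio x a y b ^ p + crossRatio x b y a ^ p) ^ (1 / p))}

/-- The metric j_G^p(x,y) = sup_{a ∈ ∂G} log(1 + (|x−y|^p/|x−a|^p + |x−y|^p/|y−a|^p)^(1/p)). -/
def jP {n : ℕ} (p : ℝ) (G : Set (En n)) (x y : En n) : ℝ :=
  sSup {r : ℝ | ∃ a ∈ frontier G,
    r = Real.log (1 + (‖x - y‖ ^ p / ‖x - a‖ ^ p + ‖x - y‖ ^ p / ‖y - a‖ ^ p) ^ (1 / p))}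

/-! ### Auxiliary lemmas -/

/-- Two-dimensional Minkowski inequality for the ℓᵖ-"norm" on pairs of nonnegative reals. -/
lemma lp2_aux {p : ℝ} (hp : 1 ≤ p) {u₁ v₁ u₂ v₂ : ℝ} (hu₁ : 0 ≤ u₁) (hv₁ : 0 ≤ v₁)
    (hu₂ : 0 ≤ u₂) (hv₂ : 0 ≤ v₂) :
    ((u₁ + u₂) ^ p + (v₁ + v₂) ^ p) ^ (1/p) ≤
      (u₁ ^ p + v₁ ^ p) ^ (1/p) + (u₂ ^ p + v₂ ^ p) ^ (1/p) := by
  have h := Real.Lp_add_le_of_nonneg (s := (Finset.univ : Finset (Fin 2))) (f := ![u₁, v₁])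
    (g := ![u₂, v₂]) hp (by intro i _; fin_cases i <;> simpa) (by intro i _; fin_cases i <;> simpa)
  simpa [Fin.sum_univ_two] using h

/-- The key elementary inequality. -/
lemma key_aux {p : ℝ} (hp : 1 ≤ p) {r1 r2 r3 r4 u v : ℝ}
    (h1 : 0 ≤ r1) (h2 : 0 ≤ r2) (h3 : 0 ≤ r3) (h4 : 0 ≤ r4)
    (hu0 : 0 ≤ u) (hv0 : 0 ≤ v)
    (hu : u ≤ r1 + r4 + r1 * r4) (hv : v ≤ r2 + r3 + r2 * r3) :
    1 + (u ^ p + v ^ p) ^ (1/p) ≤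
      (1 + (r1 ^ p + r2 ^ p) ^ (1/p)) * (1 + (r3 ^ p + r4 ^ p) ^ (1/p)) := by
  have hp0 : 0 ≤ p := zero_le_one.trans hp
  have hinv : 0 ≤ 1/p := by positivity
  set A := (r1 ^ p + r2 ^ p) ^ (1/p) with hA_def
  set B := (r3 ^ p + r4 ^ p) ^ (1/p) with hB_def
  have hA : 0 ≤ A := Real.rpow_nonneg (by positivity) _
  have hB : 0 ≤ B := Real.rpow_nonneg (by positivity) _
  have step1 : (u ^ p + v ^ p) ^ (1/p) ≤
      ((r1 + (r4 + r1 * r4)) ^ p + (r2 + (r3 + r2 * r3)) ^ p) ^ (1/p) := by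
    apply Real.rpow_le_rpow (by positivity) _ hinv
    exact add_le_add (Real.rpow_le_rpow hu0 (by linarith) hp0)
      (Real.rpow_le_rpow hv0 (by linarith) hp0)
  have step2 : ((r1 + (r4 + r1 * r4)) ^ p + (r2 + (r3 + r2 * r3)) ^ p) ^ (1/p) ≤
      A + ((r4 + r1 * r4) ^ p + (r3 + r2 * r3) ^ p) ^ (1/p) :=
    lp2_aux hp h1 h2 (by positivity) (by positivity)
  have step3 : ((r4 + r1 * r4) ^ p + (r3 + r2 * r3) ^ p) ^ (1/p) ≤
      (r4 ^ p + r3 ^ p) ^ (1/p) + ((r1 * r4) ^ p + (r2 * r3) ^ p) ^ (1/p) :=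
    lp2_aux hp h4 h3 (by positivity) (by positivity)
  have hBeq : (r4 ^ p + r3 ^ p) ^ (1/p) = B := by rw [hB_def, add_comm]
  have step4 : ((r1 * r4) ^ p + (r2 * r3) ^ p) ^ (1/p) ≤ A * B := by
    have e : A * B = ((r1 ^ p + r2 ^ p) * (r3 ^ p + r4 ^ p)) ^ (1/p) :=
      (Real.mul_rpow (by positivity) (by positivity)).symm
    rw [e]
    apply Real.rpow_le_rpow (by positivity) _ hinv
    rw [Real.mul_rpow h1 h4, Real.mul_rpow h2 h3]
    nlinarith [Real.rpow_nonneg h1 p, Real.rpow_nonneg h2 p, Real.rpow_nonneg h3 p,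
      Real.rpow_nonneg h4 p]
  nlinarith [step1, step2, step3, step4, hBeq]

lemma crossRatio_nonneg {n : ℕ} (a b c d : OnePoint (En n)) : 0 ≤ crossRatio a b c d := by
  have h : ∀ u v : OnePoint (En n), 0 ≤ chordal u v := by
    intro u v
    cases u <;> cases v <;> simp [chordal] <;> positivity
  exact div_nonneg (mul_nonneg (h _ _) (h _ _)) (mul_nonneg (h _ _) (h _ _))

lemma sqrt_pos' {n : ℕ} (x : En n) : (0:ℝ) < Real.sqrt (1 + ‖x‖ ^ 2) :=
  Real.sqrt_pos.mpr (by positivity)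

lemma crossRatio_coe' {n : ℕ} (x a y b : En n) (hxa : ‖x - a‖ ≠ 0) (hyb : ‖y - b‖ ≠ 0) :
    crossRatio (x : OnePoint (En n)) a y b = ‖x - y‖ * ‖a - b‖ / (‖x - a‖ * ‖y - b‖) := by
  have sx := (sqrt_pos' x).ne'
  have sy := (sqrt_pos' y).ne'
  have sa := (sqrt_pos' a).ne'
  have sb := (sqrt_pos' b).ne'
  show ‖x - y‖ / (_ * _) * (‖a - b‖ / (_ * _)) / (‖x - a‖ / (_ * _) * (‖y - b‖ / (_ * _))) = _
  field_simp

lemma crossRatio_infty_right' {n : ℕ} (x a y : En n) (hxa : ‖x - a‖ ≠ 0) :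
    crossRatio (x : OnePoint (En n)) a y ∞ = ‖x - y‖ / ‖x - a‖ := by
  have sx := (sqrt_pos' x).ne'
  have sy := (sqrt_pos' y).ne'
  have sa := (sqrt_pos' a).ne'
  show ‖x - y‖ / (_ * _) * (1 / _) / (‖x - a‖ / (_ * _) * (1 / _)) = _
  field_simp

lemma crossRatio_infty_left' {n : ℕ} (x y b : En n) (hyb : ‖y - b‖ ≠ 0) :
    crossRatio (x : OnePoint (En n)) ∞ y b = ‖x - y‖ / ‖y - b‖ := by
  have sx := (sqrt_pos' x).ne'
  have sy := (sqrt_pos' y).ne'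
  have sb := (sqrt_pos' b).ne'
  show ‖x - y‖ / (_ * _) * (1 / _) / (1 / _ * (‖y - b‖ / (_ * _))) = _
  field_simp

lemma crossRatio_infty_infty' {n : ℕ} (x y : En n) :
    crossRatio (x : OnePoint (En n)) ∞ y ∞ = 0 := by
  show _ * (0:ℝ) / _ = 0
  simp

lemma frontier_coe' {n : ℕ} {G : Set (En n)} (hG : IsOpen G) (b : En n)
    (hb : (b : OnePoint (En n)) ∈ frontier ((((↑) : En n → OnePoint (En n))) '' G)) :
    b ∈ frontier G := by
  have hopen : IsOpen ((((↑) : En n → OnePoint (En n))) '' G) := isOpenEmbedding_coe.isOpenMap _ hG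
  rw [frontier, hopen.interior_eq] at hb
  obtain ⟨h1, h2⟩ := hb
  rw [hG.frontier_eq]
  constructor
  · have := isOpenEmbedding_coe.isInducing.closure_eq_preimage_closure_image
      (f := ((↑) : En n → OnePoint (En n))) G
    rw [this]; exact h1
  · intro hbG; exact h2 ⟨b, hbG, rfl⟩

set_option maxHeartbeats 1000000 in
/-- δ_G^p ≤ 2 · j_G^p for 1 ≤ p < ∞ and a proper subdomain G of ℝⁿ, where in δ_G^p the
boundary is taken in ℝ̄ⁿ = ℝⁿ ∪ {∞}. -/
theorem deltaP_le_two_mul_jP (n : ℕ) (hn : 2 ≤ n) (G : Set (En n))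
    (hopen : IsOpen G) (hconn : IsConnected G) (hne : G ≠ Set.univ)
    (p : ℝ) (hp : 1 ≤ p)
    (x y : En n) (hx : x ∈ G) (hy : y ∈ G) :
    deltaP p (((↑) : En n → OnePoint (En n)) '' G) (x : OnePoint (En n)) (y : OnePoint (En n)) ≤
      2 * jP p G x y := by
  have hp0 : (0:ℝ) < p := zero_lt_one.trans_le hp
  have hpne : p ≠ 0 := hp0.ne'
  have hinv : (0:ℝ) ≤ 1/p := by positivity
  -- the (Euclidean) frontier is nonempty
  have hfr : (frontier G).Nonempty := by
    by_contra h
    rw [Set.not_nonempty_iff_eq_empty] at h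
    rcases isClopen_iff.mp (isClopen_iff_frontier_eq_empty.mpr h) with h' | h'
    · exact absurd (h' ▸ hx) (Set.notMem_empty x)
    · exact hne h'
  -- positive distances to the frontier
  have hGc : Gᶜ.Nonempty := Set.nonempty_compl.mpr hne
  have hsub : frontier G ⊆ Gᶜ := by
    rw [hopen.frontier_eq]; exact fun z hz => hz.2
  have hdx : 0 < Metric.infDist x (frontier G) := by
    have h1 : 0 < Metric.infDist x Gᶜ :=
      ((hopen.isClosed_compl).notMem_iff_infDist_pos hGc).mp (by simpa using hx)
    exact h1.trans_le (Metric.infDist_le_infDist_of_subset hsub hfr)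
  have hdy : 0 < Metric.infDist y (frontier G) := by
    have h1 : 0 < Metric.infDist y Gᶜ :=
      ((hopen.isClosed_compl).notMem_iff_infDist_pos hGc).mp (by simpa using hy)
    exact h1.trans_le (Metric.infDist_le_infDist_of_subset hsub hfr)
  set dx := Metric.infDist x (frontier G)
  set dy := Metric.infDist y (frontier G)
  -- the set defining jP is bounded above
  have hbdd : BddAbove {r : ℝ | ∃ a ∈ frontier G,
      r = Real.log (1 + (‖x - y‖ ^ p / ‖x - a‖ ^ p + ‖x - y‖ ^ p / ‖y - a‖ ^ p) ^ (1 / p))} := by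
    refine ⟨Real.log (1 + (‖x - y‖ ^ p / dx ^ p + ‖x - y‖ ^ p / dy ^ p) ^ (1/p)), ?_⟩
    rintro r ⟨a, ha, rfl⟩
    have hxa : dx ≤ ‖x - a‖ := by
      rw [← dist_eq_norm]; exact Metric.infDist_le_dist_of_mem ha
    have hya : dy ≤ ‖y - a‖ := by
      rw [← dist_eq_norm]; exact Metric.infDist_le_dist_of_mem ha
    have hxap : (0:ℝ) < ‖x - a‖ := hdx.trans_le hxa
    have hyap : (0:ℝ) < ‖y - a‖ := hdy.trans_le hya
    gcongr
  -- membership bound for jP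
  have hjmem : ∀ a ∈ frontier G,
      Real.log (1 + (‖x - y‖ ^ p / ‖x - a‖ ^ p + ‖x - y‖ ^ p / ‖y - a‖ ^ p) ^ (1 / p))
        ≤ jP p G x y := fun a ha => le_csSup hbdd ⟨a, ha, rfl⟩
  obtain ⟨a₀, ha₀⟩ := hfr
  have hj0 : 0 ≤ jP p G x y := by
    refine le_trans (Real.log_nonneg ?_) (hjmem a₀ ha₀)
    have : 0 ≤ (‖x - y‖ ^ p / ‖x - a₀‖ ^ p + ‖x - y‖ ^ p / ‖y - a₀‖ ^ p) ^ (1/p) :=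
      Real.rpow_nonneg (by positivity) _
    linarith
  -- nonzero norms for frontier points
  have hne' : ∀ z ∈ G, ∀ a ∈ frontier G, ‖z - a‖ ≠ 0 := by
    intro z hz a ha
    have haG : a ∉ G := fun h => (hsub ha) h
    have : z ≠ a := fun h => haG (h ▸ hz)
    simpa [sub_eq_zero] using this
  -- main estimate
  refine Real.sSup_le ?_ (by linarith)
  rintro r ⟨a', ha', b', hb', rfl⟩
  cases a' with
  | infty =>
    cases b' with
    | infty =>
      rw [crossRatio_infty_infty', Real.zero_rpow hpne, add_zero,
        Real.zero_rpow (one_div_ne_zero hpne), add_zero, Real.log_one]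
      linarith
    | coe b =>
      have hb : b ∈ frontier G := frontier_coe' hopen b hb'
      have hxb := hne' x hx b hb
      have hyb := hne' y hy b hb
      rw [crossRatio_infty_left' x y b hyb, crossRatio_infty_right' x b y hxb]
      have e : (‖x - y‖ / ‖y - b‖) ^ p + (‖x - y‖ / ‖x - b‖) ^ p
          = ‖x - y‖ ^ p / ‖x - b‖ ^ p + ‖x - y‖ ^ p / ‖y - b‖ ^ p := by
        rw [Real.div_rpow (norm_nonneg _) (norm_nonneg _),
          Real.div_rpow (norm_nonneg _) (norm_nonneg _), add_comm]
      rw [e]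
      linarith [hjmem b hb]
  | coe a =>
    have ha : a ∈ frontier G := frontier_coe' hopen a ha'
    have hxa := hne' x hx a ha
    have hya := hne' y hy a ha
    cases b' with
    | infty =>
      rw [crossRatio_infty_right' x a y hxa, crossRatio_infty_left' x y a hya]
      have e : (‖x - y‖ / ‖x - a‖) ^ p + (‖x - y‖ / ‖y - a‖) ^ p
          = ‖x - y‖ ^ p / ‖x - a‖ ^ p + ‖x - y‖ ^ p / ‖y - a‖ ^ p := by
        rw [Real.div_rpow (norm_nonneg _) (norm_nonneg _),
          Real.div_rpow (norm_nonneg _) (norm_nonneg _)]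
      rw [e]
      linarith [hjmem a ha]
    | coe b =>
      have hb : b ∈ frontier G := frontier_coe' hopen b hb'
      have hxb := hne' x hx b hb
      have hyb := hne' y hy b hb
      have hxap : (0:ℝ) < ‖x - a‖ := (norm_nonneg _).lt_of_ne' hxa
      have hyap : (0:ℝ) < ‖y - a‖ := (norm_nonneg _).lt_of_ne' hya
      have hxbp : (0:ℝ) < ‖x - b‖ := (norm_nonneg _).lt_of_ne' hxb
      have hybp : (0:ℝ) < ‖y - b‖ := (norm_nonneg _).lt_of_ne' hyb
      set r1 := ‖x - y‖ / ‖x - a‖ with hr1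
      set r2 := ‖x - y‖ / ‖y - a‖ with hr2
      set r3 := ‖x - y‖ / ‖x - b‖ with hr3
      set r4 := ‖x - y‖ / ‖y - b‖ with hr4
      have h1 : 0 ≤ r1 := by positivity
      have h2 : 0 ≤ r2 := by positivity
      have h3 : 0 ≤ r3 := by positivity
      have h4 : 0 ≤ r4 := by positivity
      have hu : crossRatio (x : OnePoint (En n)) a y b ≤ r1 + r4 + r1 * r4 := by
        rw [crossRatio_coe' x a y b hxa hyb]
        have htri : ‖a - b‖ ≤ ‖x - a‖ + ‖x - y‖ + ‖y - b‖ := by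
          calc ‖a - b‖ = ‖-(x - a) + (x - y) + (y - b)‖ := by congr 1; abel
            _ ≤ ‖-(x - a)‖ + ‖x - y‖ + ‖y - b‖ := norm_add₃_le
            _ = ‖x - a‖ + ‖x - y‖ + ‖y - b‖ := by rw [norm_neg]
        calc ‖x - y‖ * ‖a - b‖ / (‖x - a‖ * ‖y - b‖)
            ≤ ‖x - y‖ * (‖x - a‖ + ‖x - y‖ + ‖y - b‖) / (‖x - a‖ * ‖y - b‖) := by
              gcongr
          _ = r1 + r4 + r1 * r4 := by rw [hr1, hr4]; field_simp; ring
      have hv : crossRatio (x : OnePoint (En n)) b y a ≤ r2 + r3 + r2 * r3 := by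
        rw [crossRatio_coe' x b y a hxb hya]
        have htri : ‖b - a‖ ≤ ‖x - b‖ + ‖x - y‖ + ‖y - a‖ := by
          calc ‖b - a‖ = ‖-(x - b) + (x - y) + (y - a)‖ := by congr 1; abel
            _ ≤ ‖-(x - b)‖ + ‖x - y‖ + ‖y - a‖ := norm_add₃_le
            _ = ‖x - b‖ + ‖x - y‖ + ‖y - a‖ := by rw [norm_neg]
        calc ‖x - y‖ * ‖b - a‖ / (‖x - b‖ * ‖y - a‖)
            ≤ ‖x - y‖ * (‖x - b‖ + ‖x - y‖ + ‖y - a‖) / (‖x - b‖ * ‖y - a‖) := by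
              gcongr
          _ = r2 + r3 + r2 * r3 := by rw [hr2, hr3]; field_simp; ring
      have hkey := key_aux hp h1 h2 h3 h4 (crossRatio_nonneg _ _ _ _) (crossRatio_nonneg _ _ _ _)
        hu hv
      set A := (r1 ^ p + r2 ^ p) ^ (1/p) with hA_def
      set B := (r3 ^ p + r4 ^ p) ^ (1/p) with hB_def
      have hA : 0 ≤ A := Real.rpow_nonneg (by positivity) _
      have hB : 0 ≤ B := Real.rpow_nonneg (by positivity) _
      have eA : A = (‖x - y‖ ^ p / ‖x - a‖ ^ p + ‖x - y‖ ^ p / ‖y - a‖ ^ p) ^ (1/p) := by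
        rw [hA_def, hr1, hr2, Real.div_rpow (norm_nonneg _) (norm_nonneg _),
          Real.div_rpow (norm_nonneg _) (norm_nonneg _)]
      have eB : B = (‖x - y‖ ^ p / ‖x - b‖ ^ p + ‖x - y‖ ^ p / ‖y - b‖ ^ p) ^ (1/p) := by
        rw [hB_def, hr3, hr4, Real.div_rpow (norm_nonneg _) (norm_nonneg _),
          Real.div_rpow (norm_nonneg _) (norm_nonneg _)]
      have hcr0 : 0 ≤ (crossRatio (x : OnePoint (En n)) a y b ^ p
          + crossRatio (x : OnePoint (En n)) b y a ^ p) ^ (1/p) :=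
        Real.rpow_nonneg (add_nonneg (Real.rpow_nonneg (crossRatio_nonneg _ _ _ _) _)
          (Real.rpow_nonneg (crossRatio_nonneg _ _ _ _) _)) _
      calc Real.log (1 + (crossRatio (x : OnePoint (En n)) a y b ^ p
              + crossRatio (x : OnePoint (En n)) b y a ^ p) ^ (1/p))
          ≤ Real.log ((1 + A) * (1 + B)) := Real.log_le_log (by linarith) hkey
        _ = Real.log (1 + A) + Real.log (1 + B) :=
            Real.log_mul (by linarith) (by linarith)
        _ ≤ jP p G x y + jP p G x y := by
            refine add_le_add ?_ ?_
            · rw [eA]; exact hjmem a ha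
            · rw [eB]; exact hjmem b hb
        _ = 2 * jP p G x y := by ring
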